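/- For every natural number n, the number of triples (x,y,z) ∈ [0,2^n)³ such that x + y - z ∈ [0,2^n) and x ⊕ y ⊕ z = x + y - z is at most 6^n, where ⊕ denotes bitwise XOR. -/

import Mathlib

/-- Key identity: `a + b = (a ^^^ b) + 2 * (a &&& b)`. -/
lemma add_eq_xor_add_two_mul_land (a : ℕ) : ∀ b : ℕ, a + b = (a ^^^ b) + 2 * (a &&& b) := by
  induction a using Nat.binaryRec with
  | zero => intro b; simp
  | bit x a ih =>
    intro b
    induction b using Nat.bitCasesOn with
    | bit y b =>
      rw [Nat.xor_bit, Nat.land_bit, Nat.bit_val, Nat.bit_val, Nat.bit_val, Nat.bit_val]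
      have := ih b
      cases x <;> cases y <;> simp [Bool.toNat] at * <;> omega

lemma land_eq_of_add_xor (x y z w : ℕ) (hadd : x + y = z + w) (hxor : x ^^^ y = z ^^^ w) :
    x &&& y = z &&& w := by
  have h1 := add_eq_xor_add_two_mul_land x y
  have h2 := add_eq_xor_add_two_mul_land z w
  omega

theorem stmt_1 (n : ℕ) :
    ((Finset.range (2 ^ n) ×ˢ Finset.range (2 ^ n) ×ˢ Finset.range (2 ^ n)).filter
      (fun p : ℕ × ℕ × ℕ => p.2.2 ≤ p.1 + p.2.1 ∧ p.1 + p.2.1 - p.2.2 < 2 ^ n ∧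
        p.1 ^^^ p.2.1 ^^^ p.2.2 = p.1 + p.2.1 - p.2.2)).card ≤ 6 ^ n := by
  classical
  set V : Finset (Bool × Bool × Bool) :=
    {(false,false,false),(false,true,false),(false,true,true),
     (true,false,false),(true,false,true),(true,true,true)} with hV
  have hVcard : V.card = 6 := by decide
  have hle := Finset.card_le_card_of_injOn
    (f := fun p : ℕ × ℕ × ℕ => (fun i (_ : i ∈ Finset.range n) =>
      (p.1.testBit i, p.2.1.testBit i, p.2.2.testBit i)))
    (t := (Finset.range n).pi (fun _ => V))
    ?_ ?_
    (s := (Finset.range (2 ^ n) ×ˢ Finset.range (2 ^ n) ×ˢ Finset.range (2 ^ n)).filter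
      (fun p : ℕ × ℕ × ℕ => p.2.2 ≤ p.1 + p.2.1 ∧ p.1 + p.2.1 - p.2.2 < 2 ^ n ∧
        p.1 ^^^ p.2.1 ^^^ p.2.2 = p.1 + p.2.1 - p.2.2))
  · calc _ ≤ ((Finset.range n).pi (fun _ => V)).card := hle
      _ = 6 ^ n := by
        rw [Finset.card_pi, Finset.prod_const, hVcard, Finset.card_range]
  · -- maps into
    rintro ⟨x, y, z⟩ hp
    simp only [Finset.mem_coe, Finset.mem_filter, Finset.mem_product, Finset.mem_range] at hp
    obtain ⟨⟨hx, hy, hz⟩, hzle, hwlt, hxor⟩ := hp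
    set w := x + y - z with hw
    have hadd : x + y = z + w := by omega
    have hxor' : x ^^^ y = z ^^^ w := by
      rw [← hxor, Nat.xor_comm z, Nat.xor_xor_cancel_right]
    have hand : x &&& y = z &&& w := land_eq_of_add_xor x y z w hadd hxor'
    rw [Finset.mem_coe, Finset.mem_pi]
    intro i _
    have hbw : w.testBit i = (x.testBit i).xor ((y.testBit i).xor (z.testBit i)) := by
      rw [← hxor]
      simp [Nat.testBit_xor]
    have hband : (x.testBit i && y.testBit i) = (z.testBit i && w.testBit i) := by
      have := congrArg (fun m => m.testBit i) hand
      simpa [Nat.testBit_land] using this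
    rw [hbw] at hband
    rw [hV]
    cases hx1 : x.testBit i <;> cases hy1 : y.testBit i <;> cases hz1 : z.testBit i <;>
      rw [hx1, hy1, hz1] at hband <;> simp only [hx1, hy1, hz1] <;>
      revert hband <;> decide
  · -- injective
    rintro ⟨x, y, z⟩ hp ⟨x', y', z'⟩ hq heq
    simp only [Finset.coe_filter, Set.mem_setOf_eq, Finset.mem_coe, Finset.mem_filter,
      Finset.mem_product, Finset.mem_range] at hp hq
    obtain ⟨⟨hx, hy, hz⟩, -⟩ := hp
    obtain ⟨⟨hx', hy', hz'⟩, -⟩ := hq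
    have key : ∀ i, (x.testBit i, y.testBit i, z.testBit i)
        = (x'.testBit i, y'.testBit i, z'.testBit i) := by
      intro i
      by_cases hi : i < n
      · exact congrFun (congrFun heq i) (Finset.mem_range.mpr hi)
      · push_neg at hi
        have h2 : (2 : ℕ) ^ n ≤ 2 ^ i := Nat.pow_le_pow_right (by norm_num) hi
        rw [Nat.testBit_lt_two_pow (by omega), Nat.testBit_lt_two_pow (by omega),
          Nat.testBit_lt_two_pow (by omega), Nat.testBit_lt_two_pow (by omega),
          Nat.testBit_lt_two_pow (by omega), Nat.testBit_lt_two_pow (by omega)]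
    have e1 : x = x' := Nat.eq_of_testBit_eq fun i => congrArg (·.1) (key i)
    have e2 : y = y' := Nat.eq_of_testBit_eq fun i => congrArg (·.2.1) (key i)
    have e3 : z = z' := Nat.eq_of_testBit_eq fun i => congrArg (·.2.2) (key i)
    rw [e1, e2, e3]
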